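/- In the multi-block Lauricella setting, if the Christoffel symbols satisfy the compatibility conditions δ_{βγ}Γ^{l(δ)}_{i(α)(j+k-1)(β)} − δ^δ_β Γ^{(l-j+1)(β)}_{i(α)k(γ)} − δ_{αγ}Γ^{l(δ)}_{j(β)(i+k-1)(α)} + δ^δ_α Γ^{(l-i+1)(α)}_{j(β)k(γ)} = 0 for all block labels and indices, then in particular: (i) Γ^{l(β)}_{i(α)(j+k)(α)} = Γ^{l(β)}_{(i+k)(α)j(α)} for α ≠ β; (ii) Γ^{k(β)}_{i(α)j(β)} = Γ^{l(β)}_{i(α)m(β)} whenever k−j = l−m and α ≠ β; (iii) Γ^{k(γ)}_{i(α)j(β)} = 0 whenever α, β, γ are pairwise distinct. -/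
import Mathlib


/-- **Proposition 8.2 (i),(ii),(vi).** In the multi-block Lauricella
setting (coordinates labelled `i(α)`, `α ∈ Fin r`, positional indices written as
integers, with the convention that a Christoffel symbol with an out-of-range index is
zero), if the torsionless Christoffel symbols `Γ^{l(δ)}_{i(α)j(β)}` (written
`Γ δ l α i β j`) satisfy the compatibility conditions
`δ_{βγ}Γ^{l(δ)}_{i(α)(j+k-1)(β)} − δ^δ_β Γ^{(l-j+1)(β)}_{i(α)k(γ)}
 − δ_{αγ}Γ^{l(δ)}_{j(β)(i+k-1)(α)} + δ^δ_α Γ^{(l-i+1)(α)}_{j(β)k(γ)} = 0`,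
then (i), (ii) and (vi) of Proposition 8.2 hold. -/
theorem statement19 (r : ℕ) (m : Fin r → ℕ)
    (Γ : Fin r → ℤ → Fin r → ℤ → Fin r → ℤ → ℝ)
    (hrange : ∀ (δ : Fin r) (l : ℤ) (α : Fin r) (i : ℤ) (β : Fin r) (j : ℤ),
      (l < 1 ∨ (m δ : ℤ) < l ∨ i < 1 ∨ (m α : ℤ) < i ∨ j < 1 ∨ (m β : ℤ) < j) →
      Γ δ l α i β j = 0)
    (hsym : ∀ (δ : Fin r) (l : ℤ) (α : Fin r) (i : ℤ) (β : Fin r) (j : ℤ),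
      Γ δ l α i β j = Γ δ l β j α i)
    (hcomp : ∀ (α β γ δ : Fin r) (i j k l : ℤ),
      1 ≤ i → i ≤ (m α : ℤ) → 1 ≤ j → j ≤ (m β : ℤ) → 1 ≤ k → k ≤ (m γ : ℤ) →
      1 ≤ l → l ≤ (m δ : ℤ) →
      (if β = γ then (1 : ℝ) else 0) * Γ δ l α i β (j + k - 1)
        - (if δ = β then (1 : ℝ) else 0) * Γ β (l - j + 1) α i γ k
        - (if α = γ then (1 : ℝ) else 0) * Γ δ l β j α (i + k - 1)
        + (if δ = α then (1 : ℝ) else 0) * Γ α (l - i + 1) β j γ k = 0) :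
    -- (i)
    (∀ (α β : Fin r), α ≠ β → ∀ i j k l : ℤ,
      1 ≤ i → 1 ≤ j → 1 ≤ k → i + k ≤ (m α : ℤ) → j + k ≤ (m α : ℤ) →
      1 ≤ l → l ≤ (m β : ℤ) →
      Γ β l α i α (j + k) = Γ β l α (i + k) α j) ∧
    -- (ii)
    (∀ (α β : Fin r), α ≠ β → ∀ i j k l mm : ℤ,
      1 ≤ i → i ≤ (m α : ℤ) → 1 ≤ j → j ≤ (m β : ℤ) → 1 ≤ k → k ≤ (m β : ℤ) →
      1 ≤ l → l ≤ (m β : ℤ) → 1 ≤ mm → mm ≤ (m β : ℤ) → k - j = l - mm →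
      Γ β k α i β j = Γ β l α i β mm) ∧
    -- (vi)
    (∀ (α β γ : Fin r), α ≠ β → β ≠ γ → α ≠ γ → ∀ i j k : ℤ,
      1 ≤ i → i ≤ (m α : ℤ) → 1 ≤ j → j ≤ (m β : ℤ) → 1 ≤ k → k ≤ (m γ : ℤ) →
      Γ γ k α i β j = 0) := by

  refine ⟨?_, ?_, ?_⟩
  · intro α β hab i j k l hi hj hk hik hjk hl hl'
    have h := hcomp α α α β i j (k+1) l hi (by linarith) hj (by linarith)
      (by linarith) (by linarith) hl hl'
    simp [Ne.symm hab] at h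
    have e1 : j + (k+1) - 1 = j + k := by ring
    have e2 : i + (k+1) - 1 = i + k := by ring
    rw [e1, e2] at h
    have hs := hsym β l α j α (i+k)
    linarith
  · intro α β hab i j k l mm hi hia hj hjb hk hkb hl hlb hmm hmmb hkl
    have key : ∀ a b : ℤ, 1 ≤ a → a ≤ (m β : ℤ) → 1 ≤ b → b ≤ (m β : ℤ) →
        Γ β b α i β a = Γ β (b - a + 1) α i β 1 := by
      intro a b ha hab' hb hbb
      have h := hcomp α β β β i a 1 b hi hia ha hab' le_rfl (by linarith) hb hbb
      simp [Ne.symm hab, hab] at h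
      linarith
    rw [key j k hj hjb hk hkb, key mm l hmm hmmb hl hlb]
    have : k - j + 1 = l - mm + 1 := by omega
    rw [this]
  · intro α β γ hab hbc hac i j k hi hia hj hjb hk hkc
    have h := hcomp α γ β γ i 1 j k hi hia le_rfl (by linarith) hj hjb hk hkc
    simp [Ne.symm hbc, hab, Ne.symm hac] at h
    exact h
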